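/- Let δ, β, c₁, c₂ > 0. Let B be continuous on (-1,-1+δ] and H continuous on [-1,-1+δ], and suppose there exists C₀ > 0 such that |H(x) - H(-1)| ≤ C₀·(1+x)^{c₁} and |(1+x)·B(x) + β| ≤ C₀·(1+x)^{c₂} for all x ∈ (-1,-1+δ]. Suppose V ∈ C¹((-1,-1+δ]) satisfies the linear equation V'(x) + B(x)·V(x) = H(x) on (-1,-1+δ). Then there exists a constant a₁ ∈ ℝ such that for every α with 0 < α < min{c₂+β, c₂+1, c₁+1} there is C > 0 with: if β ≠ 1, |V(x) - a₁·(1+x)^{β} - (H(-1)/(1-β))·(1+x)| ≤ C·(1+x)^{α} for all x ∈ (-1,-1+δ]; and if β = 1, |V(x) - a₁·(1+x) - H(-1)·(1+x)·ln(1+x)| ≤ C·(1+x)^{α} for all x ∈ (-1,-1+δ]. -/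

import Mathlib

set_option maxHeartbeats 1000000
open Set Filter Topology MeasureTheory intervalIntegral Real

lemma abs_exp_sub_exp (a b : ℝ) : |Real.exp a - Real.exp b| ≤ Real.exp (max a b) * |a - b| := by
  wlog h : b ≤ a
  · rw [abs_sub_comm, max_comm, abs_sub_comm a b]; exact this b a (le_of_not_ge h)
  rw [max_eq_left h, abs_of_nonneg (sub_nonneg.2 (Real.exp_le_exp.2 h)),
    abs_of_nonneg (sub_nonneg.2 h)]
  have h1 := Real.add_one_le_exp (b - a)
  have h2 : Real.exp (b - a) * Real.exp a = Real.exp b := by rw [← Real.exp_add]; ring_nf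
  nlinarith [Real.exp_pos a, Real.exp_pos b]

lemma pow_absorb {t d q α : ℝ} (ht : 0 < t) (htd : t ≤ d) (hq : α ≤ q) :
    t ^ q ≤ d ^ (q - α) * t ^ α := by
  have h1 : t ^ q = t ^ (q - α) * t ^ α := by rw [← Real.rpow_add ht]; ring_nf
  rw [h1]
  have := Real.rpow_le_rpow ht.le htd (sub_nonneg.2 hq)
  exact mul_le_mul_of_nonneg_right this (Real.rpow_nonneg ht.le α)

lemma log_absorb {t d p : ℝ} (ht : 0 < t) (htd : t ≤ d) (hp : 0 < p) :
    t ^ p * Real.log (d / t) ≤ d ^ p / p := by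
  have hd : 0 < d := lt_of_lt_of_le ht htd
  have hdt : 0 < d / t := div_pos hd ht
  have h1 : Real.log (d / t) ≤ (d / t) ^ p / p := by
    have e1 : Real.log ((d / t) ^ p) = p * Real.log (d / t) := Real.log_rpow hdt p
    have e2 := Real.log_le_sub_one_of_pos (Real.rpow_pos_of_pos hdt p)
    have e3 : (0:ℝ) < (d/t) ^ p := Real.rpow_pos_of_pos hdt p
    rw [e1] at e2
    rw [le_div_iff₀ hp]
    nlinarith
  calc t ^ p * Real.log (d / t) ≤ t ^ p * ((d / t) ^ p / p) := by
        exact mul_le_mul_of_nonneg_left h1 (Real.rpow_nonneg ht.le p)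
    _ = d ^ p / p := by
        rw [Real.div_rpow hd.le ht.le]
        have : t ^ p ≠ 0 := ne_of_gt (Real.rpow_pos_of_pos ht p)
        field_simp

lemma shift_rpow_integrable {r : ℝ} (hr : -1 < r) (a b : ℝ) :
    IntervalIntegrable (fun s : ℝ => (1 + s) ^ r) volume a b := by
  have h := (intervalIntegral.intervalIntegrable_rpow' hr (a := 1 + a) (b := 1 + b)).comp_add_left 1
  simpa using h

lemma shift_rpow_integral {r : ℝ} (a b : ℝ)
    (h : -1 < r ∨ r ≠ -1 ∧ (0:ℝ) < 1 + a ∧ (0:ℝ) < 1 + b) :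
    ∫ s in a..b, (1 + s) ^ r = ((1 + b) ^ (r + 1) - (1 + a) ^ (r + 1)) / (r + 1) := by
  have h1 : (∫ s in a..b, (1 + s) ^ r) = ∫ s in (1+a)..(1+b), s ^ r :=
    intervalIntegral.integral_comp_add_left (fun s => s ^ r) 1
  rw [h1, integral_rpow]
  rcases h with h | ⟨h1, h2, h3⟩
  · exact Or.inl h
  · refine Or.inr ⟨h1, ?_⟩
    intro hc
    rw [Set.mem_uIcc] at hc
    rcases hc with ⟨hc1, hc2⟩ | ⟨hc1, hc2⟩ <;> linarith

lemma shift_inv_integral (a b : ℝ) (ha : (0:ℝ) < 1 + a) (hb : (0:ℝ) < 1 + b) :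
    ∫ s in a..b, (1 + s)⁻¹ = Real.log ((1 + b) / (1 + a)) := by
  have h1 : (∫ s in a..b, (1 + s)⁻¹) = ∫ s in (1+a)..(1+b), s⁻¹ :=
    intervalIntegral.integral_comp_add_left (fun s => s⁻¹) 1
  rw [h1, integral_inv_of_pos ha hb]

lemma keyJ (x₀ K m b : ℝ) (ρ : ℝ → ℝ) (hx₀ : (-1:ℝ) < x₀) (hm : 0 < m) (hb : 0 < b) (hK : 0 ≤ K)
    (hρc : ContinuousOn ρ (Set.Ioc (-1) x₀))
    (hρ : ∀ s ∈ Set.Ioc (-1:ℝ) x₀, |ρ s| ≤ K * (1 + s) ^ m) :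
    ∃ j : ℝ, ∀ α : ℝ, 0 < α → α < m + 1 →
      ∃ C > (0:ℝ), ∀ x ∈ Set.Ioc (-1:ℝ) x₀,
        (1 + x) ^ b * |(∫ s in x..x₀, (1 + s) ^ (-b) * ρ s) - j| ≤ C * (1 + x) ^ α := by
  set f : ℝ → ℝ := fun s => (1 + s) ^ (-b) * ρ s with hf
  have hpos : ∀ s ∈ Set.Ioc (-1:ℝ) x₀, (0:ℝ) < 1 + s := fun s hs => by linarith [hs.1]
  have hδ' : (0:ℝ) < 1 + x₀ := by linarith
  have hfc : ContinuousOn f (Set.Ioc (-1) x₀) := by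
    apply ContinuousOn.mul _ hρc
    apply ContinuousOn.rpow_const (continuous_const.add continuous_id).continuousOn
    intro s hs; exact Or.inl (ne_of_gt (hpos s hs))
  have hfb : ∀ s ∈ Set.Ioc (-1:ℝ) x₀, |f s| ≤ K * (1 + s) ^ (m - b) := by
    intro s hs
    have h1 : (0:ℝ) < 1 + s := hpos s hs
    have he : |f s| = (1+s) ^ (-b) * |ρ s| := by
      rw [hf]; rw [abs_mul, abs_of_nonneg (Real.rpow_nonneg h1.le _)]
    rw [he]
    calc (1+s) ^ (-b) * |ρ s| ≤ (1+s) ^ (-b) * (K * (1+s)^m) :=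
          mul_le_mul_of_nonneg_left (hρ s hs) (Real.rpow_nonneg h1.le _)
      _ = K * (1+s) ^ (m - b) := by
          rw [show m - b = (-b) + m by ring, Real.rpow_add h1]; ring
  -- generic step : for x in Ioc and a dominating g, |∫ f| ≤ |∫ g|
  have hdom : ∀ x ∈ Set.Ioc (-1:ℝ) x₀, ∀ g : ℝ → ℝ, IntervalIntegrable g volume x x₀ →
      (∀ s ∈ Set.Ioc x x₀, |f s| ≤ g s) →
      |∫ s in x..x₀, f s| ≤ |∫ s in x..x₀, g s| := by
    intro x hx g hgi hgb
    have := intervalIntegral.norm_integral_le_abs_of_norm_le (μ := volume) (f := f)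
      (a := x) (b := x₀) (g := g) ?_ hgi
    · simpa using this
    · rw [uIoc_of_le hx.2]
      exact (ae_restrict_iff' measurableSet_Ioc).2 (Eventually.of_forall (fun s hs => by
        simpa using hgb s hs))
  rcases lt_trichotomy b (m+1) with hcase | hcase | hcase
  · -- convergent case
    have hq : (-1:ℝ) < m - b := by linarith
    have hmeas : AEStronglyMeasurable f (volume.restrict (Set.Ioc (-1:ℝ) x₀)) :=
      hfc.aestronglyMeasurable measurableSet_Ioc
    have hgint : IntegrableOn (fun s => K * (1+s)^(m-b)) (Set.Ioc (-1:ℝ) x₀) := by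
      have := ((shift_rpow_integrable hq (-1) x₀).const_mul K)
      rwa [intervalIntegrable_iff_integrableOn_Ioc_of_le hx₀.le] at this
    have hInt : IntegrableOn f (Set.Ioc (-1:ℝ) x₀) := by
      apply Integrable.mono' hgint hmeas
      apply (ae_restrict_iff' measurableSet_Ioc).2
      exact Eventually.of_forall (fun s hs => by simpa using hfb s hs)
    refine ⟨∫ s in (-1:ℝ)..x₀, f s, ?_⟩
    intro α hα hαm
    have hq' : (0:ℝ) < m - b + 1 := by linarith
    have hcoef : (0:ℝ) ≤ K / (m - b + 1) * (1+x₀) ^ (m + 1 - α) :=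
      mul_nonneg (div_nonneg hK hq'.le) (Real.rpow_nonneg hδ'.le _)
    refine ⟨K / (m - b + 1) * (1+x₀) ^ (m + 1 - α) + 1, by linarith, ?_⟩
    intro x hx
    have ht : (0:ℝ) < 1 + x := hpos x hx
    have htd : 1 + x ≤ 1 + x₀ := by linarith [hx.2]
    have hint1 : IntervalIntegrable f volume (-1) x := by
      rw [intervalIntegrable_iff_integrableOn_Ioc_of_le hx.1.le]
      exact hInt.mono_set (Set.Ioc_subset_Ioc_right hx.2)
    have hint2 : IntervalIntegrable f volume x x₀ := by
      rw [intervalIntegrable_iff_integrableOn_Ioc_of_le hx.2]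
      exact hInt.mono_set (Set.Ioc_subset_Ioc_left hx.1.le)
    have hadd := integral_add_adjacent_intervals hint1 hint2
    have hrew : |(∫ s in x..x₀, f s) - ∫ s in (-1:ℝ)..x₀, f s| = |∫ s in (-1:ℝ)..x, f s| := by
      rw [← hadd]; rw [show (∫ s in x..x₀, f s) - ((∫ s in (-1:ℝ)..x, f s) + ∫ s in x..x₀, f s)
        = -(∫ s in (-1:ℝ)..x, f s) by ring, abs_neg]
    rw [hrew]
    -- bound |∫ (-1)..x f| ≤ K (1+x)^(m-b+1)/(m-b+1)
    have hgi : IntervalIntegrable (fun s => K * (1+s)^(m-b)) volume (-1) x :=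
      (shift_rpow_integrable hq (-1) x).const_mul K
    have hb1 : |∫ s in (-1:ℝ)..x, f s| ≤ |∫ s in (-1:ℝ)..x, K * (1+s)^(m-b)| := by
      have := intervalIntegral.norm_integral_le_abs_of_norm_le (μ := volume) (f := f)
        (a := -1) (b := x) (g := fun s => K * (1+s)^(m-b)) ?_ hgi
      · simpa using this
      · rw [uIoc_of_le hx.1.le]
        apply (ae_restrict_iff' measurableSet_Ioc).2
        exact Eventually.of_forall (fun s hs => by
          simpa using hfb s (Set.Ioc_subset_Ioc_right hx.2 hs))
    have hcomp : (∫ s in (-1:ℝ)..x, K * (1+s)^(m-b)) = K * ((1+x)^(m-b+1) / (m-b+1)) := by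
      rw [intervalIntegral.integral_const_mul, shift_rpow_integral (-1) x (Or.inl hq)]
      have : ((1:ℝ) + -1) = 0 := by ring
      rw [this, Real.zero_rpow (by linarith : m - b + 1 ≠ 0)]
      ring
    have hb2 : |∫ s in (-1:ℝ)..x, f s| ≤ K * ((1+x)^(m-b+1) / (m-b+1)) := by
      refine hb1.trans ?_
      rw [hcomp, abs_of_nonneg (mul_nonneg hK (div_nonneg (Real.rpow_nonneg ht.le _) hq'.le))]
    calc (1+x)^b * |∫ s in (-1:ℝ)..x, f s| ≤ (1+x)^b * (K * ((1+x)^(m-b+1) / (m-b+1))) :=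
          mul_le_mul_of_nonneg_left hb2 (Real.rpow_nonneg ht.le _)
      _ = K / (m-b+1) * ((1+x)^b * (1+x)^(m-b+1)) := by ring
      _ = K / (m-b+1) * (1+x)^(m+1) := by
          rw [← Real.rpow_add ht, show b + (m-b+1) = m+1 by ring]
      _ ≤ K / (m-b+1) * ((1+x₀)^(m+1-α) * (1+x)^α) :=
          mul_le_mul_of_nonneg_left (pow_absorb ht htd hαm.le) (div_nonneg hK hq'.le)
      _ ≤ (K / (m - b + 1) * (1+x₀) ^ (m + 1 - α) + 1) * (1+x)^α := by
          have h3 : (0:ℝ) < (1+x)^α := Real.rpow_pos_of_pos ht α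
          nlinarith [hcoef, h3]
  · -- critical case b = m + 1
    refine ⟨0, ?_⟩
    intro α hα hαm
    have hbα : 0 < b - α := by linarith
    refine ⟨K * ((1+x₀) ^ (b-α) / (b-α)) + 1, by positivity, ?_⟩
    intro x hx
    have ht : (0:ℝ) < 1 + x := hpos x hx
    have htd : 1 + x ≤ 1 + x₀ := by linarith [hx.2]
    have hgi : IntervalIntegrable (fun s => K * (1+s)⁻¹) volume x x₀ := by
      apply ContinuousOn.intervalIntegrable
      rw [uIcc_of_le hx.2]
      apply ContinuousOn.mul continuousOn_const
      apply ContinuousOn.inv₀ (continuous_const.add continuous_id).continuousOn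
      intro s hs; exact ne_of_gt (by simp only [Set.mem_Icc] at hs; simp only [Pi.add_apply, id_eq]; linarith [hs.1, hx.1])
    have hb1 : |∫ s in x..x₀, f s| ≤ |∫ s in x..x₀, K * (1+s)⁻¹| := by
      apply hdom x hx _ hgi
      intro s hs
      have h1 : (0:ℝ) < 1 + s := by linarith [hs.1, hx.1]
      have := hfb s ⟨lt_trans hx.1 hs.1, hs.2⟩
      rwa [show m - b = -1 by linarith, Real.rpow_neg_one] at this
    have hcomp : (∫ s in x..x₀, K * (1+s)⁻¹) = K * Real.log ((1+x₀)/(1+x)) := by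
      rw [intervalIntegral.integral_const_mul, shift_inv_integral x x₀ ht hδ']
    have hlog : (0:ℝ) ≤ Real.log ((1+x₀)/(1+x)) :=
      Real.log_nonneg ((one_le_div ht).2 htd)
    have hb2 : |∫ s in x..x₀, f s| ≤ K * Real.log ((1+x₀)/(1+x)) := by
      refine hb1.trans ?_; rw [hcomp, abs_of_nonneg (by positivity)]
    rw [sub_zero]
    calc (1+x)^b * |∫ s in x..x₀, f s| ≤ (1+x)^b * (K * Real.log ((1+x₀)/(1+x))) :=
          mul_le_mul_of_nonneg_left hb2 (Real.rpow_nonneg ht.le _)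
      _ = K * ((1+x)^(b-α) * Real.log ((1+x₀)/(1+x))) * (1+x)^α := by
          rw [show b = (b-α) + α by ring, Real.rpow_add ht]; ring_nf
      _ ≤ K * ((1+x₀) ^ (b-α) / (b-α)) * (1+x)^α := by
          apply mul_le_mul_of_nonneg_right _ (Real.rpow_nonneg ht.le α)
          exact mul_le_mul_of_nonneg_left (log_absorb ht htd hbα) hK
      _ ≤ (K * ((1+x₀) ^ (b-α) / (b-α)) + 1) * (1+x)^α := by
          have h3 : (0:ℝ) < (1+x)^α := Real.rpow_pos_of_pos ht α
          nlinarith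
  · -- divergent power case b > m + 1
    refine ⟨0, ?_⟩
    intro α hα hαm
    have hq : m - b + 1 < 0 := by linarith
    have hq' : (0:ℝ) < b - m - 1 := by linarith
    have hcoef : (0:ℝ) ≤ K / (b - m - 1) * (1+x₀) ^ (m + 1 - α) :=
      mul_nonneg (div_nonneg hK hq'.le) (Real.rpow_nonneg hδ'.le _)
    refine ⟨K / (b - m - 1) * (1+x₀) ^ (m + 1 - α) + 1, by linarith, ?_⟩
    intro x hx
    have ht : (0:ℝ) < 1 + x := hpos x hx
    have htd : 1 + x ≤ 1 + x₀ := by linarith [hx.2]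
    have hgi : IntervalIntegrable (fun s => K * (1+s)^(m-b)) volume x x₀ := by
      apply ContinuousOn.intervalIntegrable
      rw [uIcc_of_le hx.2]
      apply ContinuousOn.mul continuousOn_const
      apply ContinuousOn.rpow_const (continuous_const.add continuous_id).continuousOn
      intro s hs
      exact Or.inl (ne_of_gt (by simp only [Set.mem_Icc] at hs; simp only [Pi.add_apply, id_eq]; linarith [hs.1, hx.1]))
    have hb1 : |∫ s in x..x₀, f s| ≤ |∫ s in x..x₀, K * (1+s)^(m-b)| := by
      apply hdom x hx _ hgi
      intro s hs
      exact hfb s ⟨lt_trans hx.1 hs.1, hs.2⟩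
    have hcomp : (∫ s in x..x₀, K * (1+s)^(m-b))
        = K * (((1+x₀)^(m-b+1) - (1+x)^(m-b+1)) / (m-b+1)) := by
      rw [intervalIntegral.integral_const_mul,
        shift_rpow_integral x x₀ (Or.inr ⟨by intro hc; rw [hc] at hq; linarith, ht, hδ'⟩)]
    have hmono : (1+x₀)^(m-b+1) ≤ (1+x)^(m-b+1) :=
      Real.rpow_le_rpow_of_nonpos ht htd hq.le
    have hb2 : |∫ s in x..x₀, f s| ≤ K * ((1+x)^(m-b+1) / (b-m-1)) := by
      refine hb1.trans ?_
      rw [hcomp, abs_mul, abs_of_nonneg hK]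
      apply mul_le_mul_of_nonneg_left _ hK
      rw [abs_div, abs_of_nonpos (by linarith : (1+x₀)^(m-b+1) - (1+x)^(m-b+1) ≤ 0),
        abs_of_nonpos hq.le]
      rw [div_le_div_iff₀ (by linarith) (by linarith)]
      have h5 : (0:ℝ) ≤ (1+x₀)^(m-b+1) := Real.rpow_nonneg hδ'.le _
      nlinarith [Real.rpow_pos_of_pos ht (m-b+1)]
    calc (1+x)^b * |(∫ s in x..x₀, f s) - 0| = (1+x)^b * |∫ s in x..x₀, f s| := by rw [sub_zero]
      _ ≤ (1+x)^b * (K * ((1+x)^(m-b+1) / (b-m-1))) :=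
          mul_le_mul_of_nonneg_left hb2 (Real.rpow_nonneg ht.le _)
      _ = K / (b-m-1) * ((1+x)^b * (1+x)^(m-b+1)) := by ring
      _ = K / (b-m-1) * (1+x)^(m+1) := by
          rw [← Real.rpow_add ht, show b + (m-b+1) = m+1 by ring]
      _ ≤ K / (b-m-1) * ((1+x₀)^(m+1-α) * (1+x)^α) := by
          exact mul_le_mul_of_nonneg_left (pow_absorb ht htd hαm.le) (div_nonneg hK hq'.le)
      _ ≤ (K / (b - m - 1) * (1+x₀) ^ (m + 1 - α) + 1) * (1+x)^α := by
          have h3 : (0:ℝ) < (1+x)^α := Real.rpow_pos_of_pos ht α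
          nlinarith [hcoef, h3]

/-- Two-term asymptotic expansion for solutions of V' + BV = H when
(1+x)B(x) = -β + O((1+x)^{c₂}) and H(x) = H(-1) + O((1+x)^{c₁}), with β > 0. -/
theorem stmt18 (δ β c₁ c₂ : ℝ) (hδ : 0 < δ) (hβ : 0 < β) (hc₁ : 0 < c₁) (hc₂ : 0 < c₂)
    (B H V V' : ℝ → ℝ)
    (hB : ContinuousOn B (Ioc (-1 : ℝ) (-1 + δ)))
    (hH : ContinuousOn H (Icc (-1 : ℝ) (-1 + δ)))
    (hO : ∃ C₀ > (0 : ℝ), ∀ x ∈ Ioc (-1 : ℝ) (-1 + δ),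
      |H x - H (-1)| ≤ C₀ * (1 + x) ^ c₁ ∧ |(1 + x) * B x + β| ≤ C₀ * (1 + x) ^ c₂)
    (hV : ∀ x ∈ Ioc (-1 : ℝ) (-1 + δ),
      HasDerivWithinAt V (V' x) (Ioc (-1 : ℝ) (-1 + δ)) x)
    (hV' : ContinuousOn V' (Ioc (-1 : ℝ) (-1 + δ)))
    (heq : ∀ x ∈ Ioo (-1 : ℝ) (-1 + δ), V' x + B x * V x = H x) :
    ∃ a₁ : ℝ, ∀ α : ℝ, 0 < α → α < min (min (c₂ + β) (c₂ + 1)) (c₁ + 1) →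
      ∃ C > (0 : ℝ),
        (β ≠ 1 → ∀ x ∈ Ioc (-1 : ℝ) (-1 + δ),
          |V x - a₁ * (1 + x) ^ β - (H (-1) / (1 - β)) * (1 + x)| ≤ C * (1 + x) ^ α) ∧
        (β = 1 → ∀ x ∈ Ioc (-1 : ℝ) (-1 + δ),
          |V x - a₁ * (1 + x) - H (-1) * (1 + x) * Real.log (1 + x)| ≤
            C * (1 + x) ^ α) := by
  obtain ⟨C₀, hC₀, hOb⟩ := hO
  set x₀ : ℝ := -1 + δ with hx₀def
  have hx₀ : (-1:ℝ) < x₀ := by simp only [hx₀def]; linarith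
  have hδeq : (1:ℝ) + x₀ = δ := by rw [hx₀def]; ring
  have hpos : ∀ s ∈ Set.Ioc (-1:ℝ) x₀, (0:ℝ) < 1 + s := fun s hs => by linarith [hs.1]
  have hsubIcc : Set.Ioc (-1:ℝ) x₀ ⊆ Set.Icc (-1:ℝ) x₀ := Set.Ioc_subset_Icc_self
  -- the perturbation r
  set r : ℝ → ℝ := fun s => B s + β / (1 + s) with hrdef
  have hrc : ContinuousOn r (Set.Ioc (-1) x₀) := by
    apply hB.add
    apply ContinuousOn.div continuousOn_const (continuous_const.add continuous_id).continuousOn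
    intro s hs; exact ne_of_gt (hpos s hs)
  have hrb : ∀ s ∈ Set.Ioc (-1:ℝ) x₀, |r s| ≤ C₀ * (1+s) ^ (c₂-1) := by
    intro s hs
    have h1 := hpos s hs
    have h2 := (hOb s hs).2
    have he : r s = ((1+s) * B s + β) / (1+s) := by rw [hrdef]; field_simp
    rw [he, abs_div, abs_of_pos h1, div_le_iff₀ h1]
    calc |(1+s)*B s + β| ≤ C₀ * (1+s)^c₂ := h2
      _ = C₀ * (1+s)^(c₂-1) * (1+s) := by
          rw [mul_assoc, ← Real.rpow_add_one (ne_of_gt h1)]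
          norm_num
  -- integrability of r up to -1
  have hrint : IntegrableOn r (Set.Ioc (-1:ℝ) x₀) := by
    have hgint : IntegrableOn (fun s => C₀ * (1+s)^(c₂-1)) (Set.Ioc (-1:ℝ) x₀) := by
      have := (shift_rpow_integrable (by linarith : (-1:ℝ) < c₂ - 1) (-1) x₀).const_mul C₀
      rwa [intervalIntegrable_iff_integrableOn_Ioc_of_le hx₀.le] at this
    apply Integrable.mono' hgint (hrc.aestronglyMeasurable measurableSet_Ioc)
    apply (ae_restrict_iff' measurableSet_Ioc).2
    exact Eventually.of_forall (fun s hs => by simpa using hrb s hs)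
  set R : ℝ → ℝ := fun x => ∫ s in x..x₀, r s with hRdef
  set R₀ : ℝ := ∫ s in (-1:ℝ)..x₀, r s with hR₀def
  have hrii : ∀ a c : ℝ, -1 ≤ a → a ≤ c → c ≤ x₀ → IntervalIntegrable r volume a c := by
    intro a c ha hac hc
    rw [intervalIntegrable_iff_integrableOn_Ioc_of_le hac]
    exact hrint.mono_set (fun s hs => ⟨lt_of_le_of_lt ha hs.1, le_trans hs.2 hc⟩)
  -- uniform bound on partial integrals of r
  have habs : ∀ a c : ℝ, -1 ≤ a → a ≤ c → c ≤ x₀ →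
      |∫ s in a..c, r s| ≤ C₀/c₂ * ((1+c)^c₂ - (1+a)^c₂) := by
    intro a c ha hac hcx
    have hgi : IntervalIntegrable (fun s => C₀*(1+s)^(c₂-1)) volume a c :=
      (shift_rpow_integrable (by linarith) a c).const_mul C₀
    have h1 : |∫ s in a..c, r s| ≤ |∫ s in a..c, C₀*(1+s)^(c₂-1)| := by
      have := intervalIntegral.norm_integral_le_abs_of_norm_le (μ := volume) (f := r)
        (a := a) (b := c) (g := fun s => C₀*(1+s)^(c₂-1)) ?_ hgi
      · simpa using this
      · rw [uIoc_of_le hac]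
        apply (ae_restrict_iff' measurableSet_Ioc).2
        apply Eventually.of_forall
        intro s hs
        have hsm : s ∈ Set.Ioc (-1:ℝ) x₀ := ⟨lt_of_le_of_lt ha hs.1, le_trans hs.2 hcx⟩
        simpa using hrb s hsm
    have h2 : (∫ s in a..c, C₀*(1+s)^(c₂-1)) = C₀/c₂ * ((1+c)^c₂ - (1+a)^c₂) := by
      rw [intervalIntegral.integral_const_mul, shift_rpow_integral a c (Or.inl (by linarith))]
      rw [show c₂ - 1 + 1 = c₂ by ring]
      ring
    refine h1.trans ?_
    rw [h2, abs_of_nonneg]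
    have h3 : (1+a)^c₂ ≤ (1+c)^c₂ := Real.rpow_le_rpow (by linarith) (by linarith) hc₂.le
    nlinarith [div_nonneg hC₀.le hc₂.le]
  set M : ℝ := C₀/c₂ * δ^c₂ with hMdef
  have hzero : ((1:ℝ) + -1) = 0 := by ring
  have hzc₂ : ((1:ℝ) + -1)^c₂ = 0 := by rw [hzero]; exact Real.zero_rpow (ne_of_gt hc₂)
  have hRM : ∀ x ∈ Set.Ioc (-1:ℝ) x₀, |R x| ≤ M := by
    intro x hx
    refine (habs x x₀ hx.1.le hx.2 le_rfl).trans ?_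
    rw [hδeq]
    have h1 : (0:ℝ) ≤ (1+x)^c₂ := Real.rpow_nonneg (by linarith [hpos x hx]) _
    have h2 : (0:ℝ) < C₀/c₂ := by positivity
    rw [hMdef]; nlinarith
  have hR₀M : |R₀| ≤ M := by
    refine (habs (-1) x₀ le_rfl hx₀.le le_rfl).trans ?_
    rw [hzc₂, hδeq, hMdef]
    exact le_of_eq (by ring)
  have hRdiff : ∀ x ∈ Set.Ioc (-1:ℝ) x₀, |R x - R₀| ≤ C₀/c₂ * (1+x)^c₂ := by
    intro x hx
    have hadd := integral_add_adjacent_intervals (hrii (-1) x le_rfl hx.1.le hx.2) (hrii x x₀ hx.1.le hx.2 le_rfl)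
    have he : R x - R₀ = -(∫ s in (-1:ℝ)..x, r s) := by
      rw [hRdef, hR₀def]; simp only [← hadd]; ring
    rw [he, abs_neg]
    refine (habs (-1) x le_rfl hx.1.le hx.2).trans ?_
    rw [hzc₂]
    exact le_of_eq (by ring)
  have hRcont : ContinuousOn R (Set.Ioc (-1) x₀) := by
    have h1 : IntegrableOn r (Set.uIcc (-1) x₀) := by
      rw [uIcc_of_le hx₀.le, integrableOn_Icc_iff_integrableOn_Ioc]; exact hrint
    exact (continuousOn_primitive_interval_left h1).mono
      (by rw [uIcc_of_le hx₀.le]; exact Set.Ioc_subset_Icc_self)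
  -- the integrating factor exponent
  set A : ℝ → ℝ := fun x => β * Real.log (1+x) - β * Real.log δ + R x with hAdef
  have hAcont : ContinuousOn A (Set.Ioc (-1) x₀) := by
    apply ContinuousOn.add _ hRcont
    apply ContinuousOn.sub _ continuousOn_const
    apply continuousOn_const.mul
    apply ContinuousOn.log (continuous_const.add continuous_id).continuousOn
    intro s hs; exact ne_of_gt (hpos s hs)
  have hAderiv : ∀ y ∈ Set.Ioo (-1:ℝ) x₀, HasDerivAt A (-B y) y := by
    intro y hy
    have hy' : y ∈ Set.Ioc (-1:ℝ) x₀ := ⟨hy.1, hy.2.le⟩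
    have h1y : (0:ℝ) < 1 + y := hpos y hy'
    have h1 : HasDerivAt (fun z : ℝ => 1 + z) 1 y := (hasDerivAt_id y).const_add 1
    have hlog : HasDerivAt (fun z => Real.log (1+z)) (1/(1+y)) y := h1.log (ne_of_gt h1y)
    have hR : HasDerivAt R (-(r y)) y := by
      apply intervalIntegral.integral_hasDerivAt_left (hrii y x₀ hy.1.le hy.2.le le_rfl)
      · exact ContinuousOn.stronglyMeasurableAtFilter isOpen_Ioo
          (hrc.mono Set.Ioo_subset_Ioc_self) y hy
      · exact hrc.continuousAt (Ioc_mem_nhds hy.1 hy.2)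
    have : HasDerivAt A (β * (1 / (1 + y)) + -r y) y := ((hlog.const_mul β).sub_const (β * Real.log δ)).add hR
    convert this using 1
    rw [hrdef]
    field_simp
    ring
  have hVcont : ContinuousOn V (Set.Ioc (-1) x₀) := fun x hx => (hV x hx).continuousWithinAt
  -- solution formula
  have hkey : ∀ x ∈ Set.Ioc (-1:ℝ) x₀, Real.exp (-(A x)) * V x
      = V x₀ - ∫ s in x..x₀, Real.exp (-(A s)) * H s := by
    intro x hx
    have hsub : Set.Icc x x₀ ⊆ Set.Ioc (-1) x₀ := fun s hs => ⟨lt_of_lt_of_le hx.1 hs.1, hs.2⟩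
    have hcon : ContinuousOn (fun y => Real.exp (-(A y)) * V y) (Set.Icc x x₀) :=
      ((hAcont.mono hsub).neg.rexp).mul (hVcont.mono hsub)
    have hderiv : ∀ y ∈ Set.Ioo x x₀,
        HasDerivWithinAt (fun z => Real.exp (-(A z)) * V z) (Real.exp (-(A y)) * H y)
          (Set.Ioi y) y := by
      intro y hy
      have hy' : y ∈ Set.Ioo (-1:ℝ) x₀ := ⟨lt_trans hx.1 hy.1, hy.2⟩
      have hA := hAderiv y hy'
      have hexp : HasDerivAt (fun z => Real.exp (-(A z))) (Real.exp (-(A y)) * B y) y := by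
        have := (hA.neg).exp
        simpa using this
      have hVy : HasDerivAt V (V' y) y :=
        (hV y ⟨hy'.1, hy'.2.le⟩).hasDerivAt (Ioc_mem_nhds hy'.1 hy'.2)
      have hprod := hexp.mul hVy
      have he : Real.exp (-(A y)) * B y * V y + Real.exp (-(A y)) * V' y
          = Real.exp (-(A y)) * H y := by
        rw [← heq y hy']; ring
      rw [he] at hprod
      exact hprod.hasDerivWithinAt
    have hint : IntervalIntegrable (fun s => Real.exp (-(A s)) * H s) volume x x₀ := by
      apply ContinuousOn.intervalIntegrable
      rw [uIcc_of_le hx.2]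
      exact ((hAcont.mono hsub).neg.rexp).mul (hH.mono (fun s hs => ⟨by linarith [hx.1, hs.1], hs.2⟩))
    have hFTC := intervalIntegral.integral_eq_sub_of_hasDeriv_right_of_le hx.2 hcon hderiv hint
    have hAx₀ : A x₀ = 0 := by
      rw [hAdef]
      simp only [hδeq]
      rw [hRdef]
      simp [intervalIntegral.integral_same]
    rw [hAx₀] at hFTC
    simp only [neg_zero, Real.exp_zero, one_mul] at hFTC
    linarith [hFTC]
  -- rewrite the integrating factor
  have hexpA : ∀ s ∈ Set.Ioc (-1:ℝ) x₀,
      Real.exp (-(A s)) = δ^β * ((1+s) ^ (-β) * Real.exp (-(R s))) := by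
    intro s hs
    have h1 := hpos s hs
    rw [show -(A s) = (-β) * Real.log (1+s) + (β * Real.log δ + -(R s)) by
      simp only [hAdef]; ring]
    rw [Real.exp_add, Real.exp_add]
    have e2 : Real.exp ((-β) * Real.log (1+s)) = (1+s) ^ (-β) := by
      rw [Real.rpow_def_of_pos h1, mul_comm]
    have e3 : Real.exp (β * Real.log δ) = δ ^ β := by
      rw [Real.rpow_def_of_pos hδ, mul_comm]
    rw [e2, e3]; ring
  have hexpApos : ∀ s ∈ Set.Ioc (-1:ℝ) x₀,
      Real.exp (A s) = δ^(-β:ℝ) * ((1+s) ^ β * Real.exp (R s)) := by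
    intro s hs
    have h1 := hpos s hs
    rw [show A s = β * Real.log (1+s) + ((-β) * Real.log δ + R s) by
      simp only [hAdef]; ring]
    rw [Real.exp_add, Real.exp_add]
    have e2 : Real.exp (β * Real.log (1+s)) = (1+s) ^ β := by
      rw [Real.rpow_def_of_pos h1, mul_comm]
    have e3 : Real.exp ((-β) * Real.log δ) = δ ^ (-β:ℝ) := by
      rw [Real.rpow_def_of_pos hδ, mul_comm]
    rw [e2, e3]; ring
  set g₀ : ℝ := Real.exp (-R₀) * H (-1) with hg₀def
  set ρ : ℝ → ℝ := fun s => Real.exp (-(R s)) * H s - g₀ with hρdef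
  set J : ℝ → ℝ := fun x => ∫ s in x..x₀, (1+s)^(-β) * ρ s with hJdef
  have hρcont : ContinuousOn ρ (Set.Ioc (-1) x₀) :=
    ((hRcont.neg.rexp).mul (hH.mono hsubIcc)).sub continuousOn_const
  set L : ℝ := Real.exp M * (C₀/c₂) with hLdef
  have hL0 : (0:ℝ) ≤ L := by positivity
  have hexpd : ∀ x ∈ Set.Ioc (-1:ℝ) x₀,
      |Real.exp (R x) - Real.exp R₀| ≤ L * (1+x)^c₂ := by
    intro x hx
    refine (abs_exp_sub_exp _ _).trans ?_
    have h1 : max (R x) R₀ ≤ M := max_le (abs_le.1 (hRM x hx)).2 (abs_le.1 hR₀M).2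
    calc Real.exp (max (R x) R₀) * |R x - R₀| ≤ Real.exp M * (C₀/c₂ * (1+x)^c₂) :=
          mul_le_mul (Real.exp_le_exp.2 h1) (hRdiff x hx) (abs_nonneg _) (Real.exp_pos M).le
      _ = L * (1+x)^c₂ := by rw [hLdef]; ring
  have hexpdneg : ∀ x ∈ Set.Ioc (-1:ℝ) x₀,
      |Real.exp (-(R x)) - Real.exp (-R₀)| ≤ L * (1+x)^c₂ := by
    intro x hx
    refine (abs_exp_sub_exp _ _).trans ?_
    have h1 : max (-(R x)) (-R₀) ≤ M :=
      max_le (by linarith [(abs_le.1 (hRM x hx)).1]) (by linarith [(abs_le.1 hR₀M).1])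
    have h2 : |-(R x) - -R₀| = |R x - R₀| := by rw [show -(R x) - -R₀ = -(R x - R₀) by ring, abs_neg]
    rw [h2]
    calc Real.exp (max (-(R x)) (-R₀)) * |R x - R₀| ≤ Real.exp M * (C₀/c₂ * (1+x)^c₂) :=
          mul_le_mul (Real.exp_le_exp.2 h1) (hRdiff x hx) (abs_nonneg _) (Real.exp_pos M).le
      _ = L * (1+x)^c₂ := by rw [hLdef]; ring
  set m : ℝ := min c₁ c₂ with hmdef
  have hm : 0 < m := lt_min hc₁ hc₂
  set K : ℝ := Real.exp M * C₀ * δ^(c₁-m) + |H (-1)| * L * δ^(c₂-m) with hKdef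
  have hK0 : 0 ≤ K := by positivity
  have hρb : ∀ s ∈ Set.Ioc (-1:ℝ) x₀, |ρ s| ≤ K * (1+s)^m := by
    intro s hs
    have h1 := hpos s hs
    have htd : 1 + s ≤ δ := by rw [← hδeq]; linarith [hs.2]
    have e1 : ρ s = Real.exp (-(R s)) * (H s - H (-1))
        + H (-1) * (Real.exp (-(R s)) - Real.exp (-R₀)) := by
      rw [hρdef, hg₀def]; ring
    have h2 : |ρ s| ≤ Real.exp (-(R s)) * |H s - H (-1)|
        + |H (-1)| * |Real.exp (-(R s)) - Real.exp (-R₀)| := by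
      rw [e1]
      refine (abs_add_le _ _).trans ?_
      rw [abs_mul, abs_mul, abs_of_nonneg (Real.exp_pos _).le]
    have h3 : Real.exp (-(R s)) ≤ Real.exp M :=
      Real.exp_le_exp.2 (by linarith [(abs_le.1 (hRM s hs)).1])
    have h6 : (1+s)^c₁ ≤ δ^(c₁-m) * (1+s)^m := pow_absorb h1 htd (min_le_left _ _)
    have h7 : (1+s)^c₂ ≤ δ^(c₂-m) * (1+s)^m := pow_absorb h1 htd (min_le_right _ _)
    have hsm : (0:ℝ) ≤ (1+s)^m := Real.rpow_nonneg h1.le m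
    calc |ρ s| ≤ Real.exp (-(R s)) * |H s - H (-1)|
          + |H (-1)| * |Real.exp (-(R s)) - Real.exp (-R₀)| := h2
      _ ≤ Real.exp M * (C₀ * (1+s)^c₁) + |H (-1)| * (L * (1+s)^c₂) :=
          add_le_add (mul_le_mul h3 ((hOb s hs).1) (abs_nonneg _) (Real.exp_pos M).le)
            (mul_le_mul_of_nonneg_left (hexpdneg s hs) (abs_nonneg _))
      _ ≤ Real.exp M * (C₀ * (δ^(c₁-m) * (1+s)^m)) + |H (-1)| * (L * (δ^(c₂-m) * (1+s)^m)) := by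
          apply add_le_add
          · apply mul_le_mul_of_nonneg_left _ (Real.exp_pos M).le
            exact mul_le_mul_of_nonneg_left h6 hC₀.le
          · apply mul_le_mul_of_nonneg_left _ (abs_nonneg _)
            exact mul_le_mul_of_nonneg_left h7 hL0
      _ = K * (1+s)^m := by rw [hKdef]; ring
  obtain ⟨j, hj⟩ := keyJ x₀ K m β ρ hx₀ hm hβ hK0 hρcont hρb
  -- integral splitting and closed form
  have hrpc : ∀ x ∈ Set.Ioc (-1:ℝ) x₀, ContinuousOn (fun s : ℝ => (1+s)^(-β:ℝ)) (Set.Icc x x₀) := by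
    intro x hx
    apply ContinuousOn.rpow_const (continuous_const.add continuous_id).continuousOn
    intro s hs
    rw [Set.mem_Icc] at hs
    exact Or.inl (ne_of_gt (by simp only [Pi.add_apply, id_eq]; linarith [hs.1, hx.1]))
  have hform : ∀ x ∈ Set.Ioc (-1:ℝ) x₀,
      V x = δ^(-β:ℝ) * ((1+x)^β * Real.exp (R x))
        * (V x₀ - δ^β * (g₀ * (∫ s in x..x₀, (1+s)^(-β:ℝ)) + J x)) := by
    intro x hx
    have hsub : Set.Icc x x₀ ⊆ Set.Ioc (-1) x₀ := fun s hs => ⟨lt_of_lt_of_le hx.1 hs.1, hs.2⟩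
    have hIβi : IntervalIntegrable (fun s : ℝ => (1+s)^(-β:ℝ)) volume x x₀ := by
      apply ContinuousOn.intervalIntegrable
      rw [uIcc_of_le hx.2]; exact hrpc x hx
    have hρi : IntervalIntegrable (fun s : ℝ => (1+s)^(-β:ℝ) * ρ s) volume x x₀ := by
      apply ContinuousOn.intervalIntegrable
      rw [uIcc_of_le hx.2]; exact (hrpc x hx).mul (hρcont.mono hsub)
    have hci : (∫ s in x..x₀, Real.exp (-(A s)) * H s)
        = δ^β * (g₀ * (∫ s in x..x₀, (1+s)^(-β:ℝ)) + J x) := by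
      have e1 : Set.EqOn (fun s => Real.exp (-(A s)) * H s)
          (fun s => δ^β * ((1+s)^(-β:ℝ) * g₀ + (1+s)^(-β:ℝ) * ρ s)) (Set.uIcc x x₀) := by
        intro s hs
        rw [uIcc_of_le hx.2] at hs
        have hs' : s ∈ Set.Ioc (-1:ℝ) x₀ := hsub hs
        simp only
        rw [hexpA s hs', hρdef]
        ring
      rw [intervalIntegral.integral_congr e1, intervalIntegral.integral_const_mul,
        intervalIntegral.integral_add (hIβi.mul_const g₀) hρi,
        intervalIntegral.integral_mul_const, hJdef]
      ring
    have h2 : Real.exp (A x) * (Real.exp (-(A x)) * V x) = V x := by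
      rw [← mul_assoc, ← Real.exp_add]; simp
    rw [← h2, hkey x hx, hci, hexpApos x hx]
  rcases eq_or_ne β 1 with hb1 | hb1
  · -- β = 1
    subst hb1
    set K₁ : ℝ := V x₀ * δ⁻¹ - g₀ * Real.log δ with hK₁def
    refine ⟨Real.exp R₀ * (K₁ - j), ?_⟩
    intro α hα hαlt
    have hαm : α < m + 1 := by
      refine lt_of_lt_of_le hαlt ?_
      rcases le_total c₁ c₂ with h | h
      · refine le_trans (min_le_right _ _) ?_
        rw [hmdef, min_eq_left h]
      · refine le_trans (min_le_left _ _) (le_trans (min_le_right _ _) ?_)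
        rw [hmdef, min_eq_right h]
    have hαc : α < c₂ + 1 := lt_of_lt_of_le hαlt (le_trans (min_le_left _ _) (min_le_right _ _))
    have hp : (0:ℝ) < c₂ + 1 - α := by linarith
    obtain ⟨CJ, hCJ, hJb⟩ := hj α hα hαm
    set Cf : ℝ := L * (|K₁| + |j|) * δ^(c₂+1-α)
      + L * |g₀| * (|Real.log δ| * δ^(c₂+1-α) + δ^(c₂+1-α)/(c₂+1-α))
      + Real.exp M * CJ + 1 with hCdef
    have hCpos : 0 < Cf := by positivity
    refine ⟨Cf, hCpos, fun hcon => absurd rfl hcon, ?_⟩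
    intro _ x hx
    have ht := hpos x hx
    have htd : 1 + x ≤ δ := by rw [← hδeq]; linarith [hx.2]
    have hIβ : (∫ s in x..x₀, (1+s)^(-1:ℝ)) = Real.log δ - Real.log (1+x) := by
      have e0 : Set.EqOn (fun s : ℝ => (1+s)^(-1:ℝ)) (fun s : ℝ => (1+s)⁻¹) (Set.uIcc x x₀) :=
        fun s _ => Real.rpow_neg_one _
      rw [intervalIntegral.integral_congr e0, shift_inv_integral x x₀ ht (by rw [hδeq]; exact hδ),
        hδeq, Real.log_div (ne_of_gt hδ) (ne_of_gt ht)]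
    have hVx : V x = Real.exp (R x)
        * (K₁ * (1+x) + g₀ * (1+x) * Real.log (1+x) - (1+x) * J x) := by
      have h0 := hform x hx
      rw [hIβ] at h0
      rw [h0, hK₁def]
      rw [Real.rpow_neg_one, Real.rpow_one, Real.rpow_one]
      have e1 : δ⁻¹ * δ = 1 := inv_mul_cancel₀ (ne_of_gt hδ)
      linear_combination (-(1+x) * Real.exp (R x) * g₀ * Real.log δ
        + (1+x) * Real.exp (R x) * g₀ * Real.log (1+x)
        - (1+x) * Real.exp (R x) * J x) * e1
    have hH1 : H (-1) = g₀ * Real.exp R₀ := by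
      rw [hg₀def, Real.exp_neg]
      field_simp
    have hD : V x - (Real.exp R₀ * (K₁ - j)) * (1+x) - H (-1) * (1+x) * Real.log (1+x)
        = (Real.exp (R x) - Real.exp R₀) * (K₁ * (1+x) + g₀ * (1+x) * Real.log (1+x))
          + (Real.exp R₀ - Real.exp (R x)) * (j * (1+x))
          + Real.exp (R x) * ((1+x) * (j - J x)) := by
      rw [hVx, hH1]; ring
    have hEd := hexpd x hx
    have hlt : |Real.log (1+x)| ≤ |Real.log δ| + Real.log (δ/(1+x)) := by
      have e : Real.log (1+x) = Real.log δ - Real.log (δ/(1+x)) := by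
        rw [Real.log_div (ne_of_gt hδ) (ne_of_gt ht)]; ring
      have hl0 : 0 ≤ Real.log (δ/(1+x)) := Real.log_nonneg ((one_le_div ht).2 htd)
      rw [e, sub_eq_add_neg]
      refine (abs_add_le _ _).trans ?_
      rw [abs_neg, abs_of_nonneg hl0]
    have hlogbound : (1+x)^(c₂+1) * |Real.log (1+x)|
        ≤ (|Real.log δ| * δ^(c₂+1-α) + δ^(c₂+1-α)/(c₂+1-α)) * (1+x)^α := by
      have h1 : (1+x)^(c₂+1) * Real.log (δ/(1+x)) ≤ (δ^(c₂+1-α)/(c₂+1-α)) * (1+x)^α := by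
        have e : (1+x)^(c₂+1) = (1+x)^(c₂+1-α) * (1+x)^α := by
          rw [← Real.rpow_add ht]; ring_nf
        rw [e]
        calc (1+x)^(c₂+1-α) * (1+x)^α * Real.log (δ/(1+x))
            = ((1+x)^(c₂+1-α) * Real.log (δ/(1+x))) * (1+x)^α := by ring
          _ ≤ (δ^(c₂+1-α)/(c₂+1-α)) * (1+x)^α :=
            mul_le_mul_of_nonneg_right (log_absorb ht htd hp) (Real.rpow_nonneg ht.le α)
      have h2 : (1+x)^(c₂+1) ≤ δ^(c₂+1-α) * (1+x)^α := pow_absorb ht htd hαc.le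
      calc (1+x)^(c₂+1) * |Real.log (1+x)|
          ≤ (1+x)^(c₂+1) * (|Real.log δ| + Real.log (δ/(1+x))) :=
            mul_le_mul_of_nonneg_left hlt (Real.rpow_nonneg ht.le _)
        _ = |Real.log δ| * (1+x)^(c₂+1) + (1+x)^(c₂+1) * Real.log (δ/(1+x)) := by ring
        _ ≤ |Real.log δ| * (δ^(c₂+1-α) * (1+x)^α) + (δ^(c₂+1-α)/(c₂+1-α)) * (1+x)^α :=
            add_le_add (mul_le_mul_of_nonneg_left h2 (abs_nonneg _)) h1
        _ = (|Real.log δ| * δ^(c₂+1-α) + δ^(c₂+1-α)/(c₂+1-α)) * (1+x)^α := by ring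
    have hT1 : |(Real.exp (R x) - Real.exp R₀) * (K₁ * (1+x) + g₀ * (1+x) * Real.log (1+x))|
        ≤ (L * |K₁| * δ^(c₂+1-α)
          + L * |g₀| * (|Real.log δ| * δ^(c₂+1-α) + δ^(c₂+1-α)/(c₂+1-α))) * (1+x)^α := by
      rw [abs_mul]
      have h2 : |K₁ * (1+x) + g₀ * (1+x) * Real.log (1+x)|
          ≤ |K₁| * (1+x) + |g₀| * ((1+x) * |Real.log (1+x)|) := by
        refine (abs_add_le _ _).trans ?_
        rw [abs_mul, abs_mul, abs_mul, abs_of_nonneg ht.le]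
        exact le_of_eq (by ring)
      calc |Real.exp (R x) - Real.exp R₀| * |K₁ * (1+x) + g₀ * (1+x) * Real.log (1+x)|
          ≤ (L * (1+x)^c₂) * (|K₁| * (1+x) + |g₀| * ((1+x) * |Real.log (1+x)|)) :=
            mul_le_mul hEd h2 (abs_nonneg _) (by positivity)
        _ = L * |K₁| * ((1+x)^c₂ * (1+x)^(1:ℝ))
            + L * |g₀| * (((1+x)^c₂ * (1+x)^(1:ℝ)) * |Real.log (1+x)|) := by
            rw [Real.rpow_one]; ring
        _ = L * |K₁| * (1+x)^(c₂+1)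
            + L * |g₀| * ((1+x)^(c₂+1) * |Real.log (1+x)|) := by
            rw [← Real.rpow_add ht]
        _ ≤ L * |K₁| * (δ^(c₂+1-α) * (1+x)^α)
            + L * |g₀| * ((|Real.log δ| * δ^(c₂+1-α) + δ^(c₂+1-α)/(c₂+1-α)) * (1+x)^α) :=
            add_le_add (mul_le_mul_of_nonneg_left (pow_absorb ht htd hαc.le) (by positivity))
              (mul_le_mul_of_nonneg_left hlogbound (by positivity))
        _ = (L * |K₁| * δ^(c₂+1-α)
            + L * |g₀| * (|Real.log δ| * δ^(c₂+1-α) + δ^(c₂+1-α)/(c₂+1-α))) * (1+x)^α := by ring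
    have hT2 : |(Real.exp R₀ - Real.exp (R x)) * (j * (1+x))|
        ≤ L * |j| * δ^(c₂+1-α) * (1+x)^α := by
      rw [abs_mul, abs_sub_comm, abs_mul, abs_of_nonneg ht.le]
      calc |Real.exp (R x) - Real.exp R₀| * (|j| * (1+x))
          ≤ (L * (1+x)^c₂) * (|j| * (1+x)) :=
            mul_le_mul_of_nonneg_right hEd (by positivity)
        _ = L * |j| * ((1+x)^c₂ * (1+x)^(1:ℝ)) := by rw [Real.rpow_one]; ring
        _ = L * |j| * (1+x)^(c₂+1) := by rw [← Real.rpow_add ht]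
        _ ≤ L * |j| * (δ^(c₂+1-α) * (1+x)^α) :=
            mul_le_mul_of_nonneg_left (pow_absorb ht htd hαc.le) (by positivity)
        _ = L * |j| * δ^(c₂+1-α) * (1+x)^α := by ring
    have hT3 : |Real.exp (R x) * ((1+x) * (j - J x))| ≤ Real.exp M * CJ * (1+x)^α := by
      rw [abs_mul, abs_of_nonneg (Real.exp_pos _).le, abs_mul, abs_of_nonneg ht.le, abs_sub_comm]
      have h1 : Real.exp (R x) ≤ Real.exp M := Real.exp_le_exp.2 (abs_le.1 (hRM x hx)).2
      have h2 := hJb x hx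
      rw [Real.rpow_one] at h2
      calc Real.exp (R x) * ((1+x) * |J x - j|) ≤ Real.exp M * (CJ * (1+x)^α) :=
            mul_le_mul h1 h2 (by positivity) (Real.exp_pos M).le
        _ = Real.exp M * CJ * (1+x)^α := by ring
    rw [hD]
    have habs3 : ∀ X1 X2 X3 : ℝ, |X1 + X2 + X3| ≤ |X1| + |X2| + |X3| := by
      intro X1 X2 X3
      refine (abs_add_le _ _).trans ?_
      linarith [abs_add_le X1 X2]
    refine le_trans (habs3 _ _ _) ?_
    refine le_trans (add_le_add (add_le_add hT1 hT2) hT3) ?_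
    have he : (L * |K₁| * δ^(c₂+1-α)
        + L * |g₀| * (|Real.log δ| * δ^(c₂+1-α) + δ^(c₂+1-α)/(c₂+1-α))) * (1+x)^α
        + L * |j| * δ^(c₂+1-α) * (1+x)^α + Real.exp M * CJ * (1+x)^α
        = (L * (|K₁| + |j|) * δ^(c₂+1-α)
          + L * |g₀| * (|Real.log δ| * δ^(c₂+1-α) + δ^(c₂+1-α)/(c₂+1-α))
          + Real.exp M * CJ) * (1+x)^α := by ring
    rw [he]
    apply mul_le_mul_of_nonneg_right _ (Real.rpow_nonneg ht.le α)
    rw [hCdef]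
    linarith
  · -- β ≠ 1
    have h1β : (1:ℝ) - β ≠ 0 := fun hc => hb1 (by linarith)
    set K₁ : ℝ := V x₀ * δ^(-β:ℝ) - g₀ * δ^(1-β) / (1-β) with hK₁def
    refine ⟨Real.exp R₀ * (K₁ - j), ?_⟩
    intro α hα hαlt
    have hαm : α < m + 1 := by
      refine lt_of_lt_of_le hαlt ?_
      rcases le_total c₁ c₂ with h | h
      · refine le_trans (min_le_right _ _) ?_
        rw [hmdef, min_eq_left h]
      · refine le_trans (min_le_left _ _) (le_trans (min_le_right _ _) ?_)
        rw [hmdef, min_eq_right h]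
    have hαβ : α < c₂ + β := lt_of_lt_of_le hαlt (le_trans (min_le_left _ _) (min_le_left _ _))
    have hαc : α < c₂ + 1 := lt_of_lt_of_le hαlt (le_trans (min_le_left _ _) (min_le_right _ _))
    obtain ⟨CJ, hCJ, hJb⟩ := hj α hα hαm
    set Cf : ℝ := L * (|K₁| + |j|) * δ^(c₂+β-α) + L * |g₀/(1-β)| * δ^(c₂+1-α)
      + Real.exp M * CJ + 1 with hCdef
    have hCpos : 0 < Cf := by positivity
    refine ⟨Cf, hCpos, ?_, fun hcon => absurd hcon hb1⟩
    intro _ x hx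
    have ht := hpos x hx
    have htd : 1 + x ≤ δ := by rw [← hδeq]; linarith [hx.2]
    have hIβ : (∫ s in x..x₀, (1+s)^(-β:ℝ)) = (δ^(1-β) - (1+x)^(1-β))/(1-β) := by
      rw [shift_rpow_integral x x₀ (Or.inr ⟨fun hc => hb1 (by linarith [neg_eq_iff_eq_neg.1 hc]),
        ht, by rw [hδeq]; exact hδ⟩)]
      rw [hδeq, show -β + 1 = 1 - β by ring]
    have hVx : V x = Real.exp (R x)
        * (K₁ * (1+x)^β + (g₀/(1-β)) * (1+x) - (1+x)^β * J x) := by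
      have h0 := hform x hx
      rw [hIβ] at h0
      rw [h0, hK₁def]
      have e1 : δ^(-β:ℝ) * δ^(β:ℝ) = 1 := by
        rw [← Real.rpow_add hδ, neg_add_cancel, Real.rpow_zero]
      have e2 : (1+x)^β * (1+x)^(1-β) = 1+x := by
        rw [← Real.rpow_add ht, show β + (1-β) = 1 by ring, Real.rpow_one]
      linear_combination (-(((1+x)^β * Real.exp (R x) * g₀ * ((δ^(1-β) - (1+x)^(1-β))/(1-β)))
        + (1+x)^β * Real.exp (R x) * J x)) * e1 + (Real.exp (R x) * g₀/(1-β)) * e2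
    have hH1 : H (-1) = g₀ * Real.exp R₀ := by
      rw [hg₀def, Real.exp_neg]
      field_simp
    have hD : V x - (Real.exp R₀ * (K₁ - j)) * (1+x)^β - (H (-1)/(1-β)) * (1+x)
        = (Real.exp (R x) - Real.exp R₀) * (K₁ * (1+x)^β + (g₀/(1-β)) * (1+x))
          + (Real.exp R₀ - Real.exp (R x)) * (j * (1+x)^β)
          + Real.exp (R x) * ((1+x)^β * (j - J x)) := by
      rw [hVx, hH1]; ring
    have hEd := hexpd x hx
    have hT1 : |(Real.exp (R x) - Real.exp R₀) * (K₁ * (1+x)^β + (g₀/(1-β)) * (1+x))|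
        ≤ (L * |K₁| * δ^(c₂+β-α) + L * |g₀/(1-β)| * δ^(c₂+1-α)) * (1+x)^α := by
      rw [abs_mul]
      have h2 : |K₁ * (1+x)^β + (g₀/(1-β)) * (1+x)|
          ≤ |K₁| * (1+x)^β + |g₀/(1-β)| * (1+x) := by
        refine (abs_add_le _ _).trans ?_
        rw [abs_mul, abs_mul, abs_of_nonneg (Real.rpow_nonneg ht.le β), abs_of_nonneg ht.le]
      calc |Real.exp (R x) - Real.exp R₀| * |K₁ * (1+x)^β + (g₀/(1-β)) * (1+x)|
          ≤ (L * (1+x)^c₂) * (|K₁| * (1+x)^β + |g₀/(1-β)| * (1+x)) :=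
            mul_le_mul hEd h2 (abs_nonneg _) (by positivity)
        _ = L * |K₁| * ((1+x)^c₂ * (1+x)^β) + L * |g₀/(1-β)| * ((1+x)^c₂ * (1+x)^(1:ℝ)) := by
            rw [Real.rpow_one]; ring
        _ = L * |K₁| * (1+x)^(c₂+β) + L * |g₀/(1-β)| * (1+x)^(c₂+1) := by
            rw [← Real.rpow_add ht, ← Real.rpow_add ht]
        _ ≤ L * |K₁| * (δ^(c₂+β-α) * (1+x)^α) + L * |g₀/(1-β)| * (δ^(c₂+1-α) * (1+x)^α) :=
            add_le_add (mul_le_mul_of_nonneg_left (pow_absorb ht htd hαβ.le) (by positivity))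
              (mul_le_mul_of_nonneg_left (pow_absorb ht htd hαc.le) (by positivity))
        _ = (L * |K₁| * δ^(c₂+β-α) + L * |g₀/(1-β)| * δ^(c₂+1-α)) * (1+x)^α := by ring
    have hT2 : |(Real.exp R₀ - Real.exp (R x)) * (j * (1+x)^β)|
        ≤ L * |j| * δ^(c₂+β-α) * (1+x)^α := by
      rw [abs_mul, abs_sub_comm, abs_mul, abs_of_nonneg (Real.rpow_nonneg ht.le β)]
      calc |Real.exp (R x) - Real.exp R₀| * (|j| * (1+x)^β)
          ≤ (L * (1+x)^c₂) * (|j| * (1+x)^β) :=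
            mul_le_mul_of_nonneg_right hEd (by positivity)
        _ = L * |j| * ((1+x)^c₂ * (1+x)^β) := by ring
        _ = L * |j| * (1+x)^(c₂+β) := by rw [← Real.rpow_add ht]
        _ ≤ L * |j| * (δ^(c₂+β-α) * (1+x)^α) :=
            mul_le_mul_of_nonneg_left (pow_absorb ht htd hαβ.le) (by positivity)
        _ = L * |j| * δ^(c₂+β-α) * (1+x)^α := by ring
    have hT3 : |Real.exp (R x) * ((1+x)^β * (j - J x))| ≤ Real.exp M * CJ * (1+x)^α := by
      rw [abs_mul, abs_of_nonneg (Real.exp_pos _).le, abs_mul,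
        abs_of_nonneg (Real.rpow_nonneg ht.le β), abs_sub_comm]
      have h1 : Real.exp (R x) ≤ Real.exp M := Real.exp_le_exp.2 (abs_le.1 (hRM x hx)).2
      calc Real.exp (R x) * ((1+x)^β * |J x - j|) ≤ Real.exp M * (CJ * (1+x)^α) :=
            mul_le_mul h1 (hJb x hx) (by positivity) (Real.exp_pos M).le
        _ = Real.exp M * CJ * (1+x)^α := by ring
    rw [hD]
    have habs3 : ∀ X1 X2 X3 : ℝ, |X1 + X2 + X3| ≤ |X1| + |X2| + |X3| := by
      intro X1 X2 X3
      refine (abs_add_le _ _).trans ?_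
      linarith [abs_add_le X1 X2]
    refine le_trans (habs3 _ _ _) ?_
    refine le_trans (add_le_add (add_le_add hT1 hT2) hT3) ?_
    have he : (L * |K₁| * δ^(c₂+β-α) + L * |g₀/(1-β)| * δ^(c₂+1-α)) * (1+x)^α
        + L * |j| * δ^(c₂+β-α) * (1+x)^α + Real.exp M * CJ * (1+x)^α
        = (L * (|K₁| + |j|) * δ^(c₂+β-α) + L * |g₀/(1-β)| * δ^(c₂+1-α)
          + Real.exp M * CJ) * (1+x)^α := by ring
    rw [he]
    apply mul_le_mul_of_nonneg_right _ (Real.rpow_nonneg ht.le α)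
    rw [hCdef]
    linarith
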